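/- Let X be an infinite-dimensional Banach space, u ∈ X, and {(x_k, f_k) : 1 ≤ k ≤ n} a finite biorthogonal sequence in X × X*. Then there exist x_{n+1} ∈ X and f_{n+1} ∈ X* such that ‖x_{n+1}‖ = 1, the family {(x_k, f_k) : 1 ≤ k ≤ n+1} is biorthogonal, and u ∈ span{x_1, …, x_{n+1}}. -/

import Mathlib

open Filter Topology

/-- Lemma 2: a finite biorthogonal sequence `{(x_k, f_k) : 1 ≤ k ≤ n}` in an
infinite-dimensional Banach space can be extended by one pair `(x_{n+1}, f_{n+1})` with
`‖x_{n+1}‖ = 1` so that it stays biorthogonal and a prescribed vector `u` belongs to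
`span{x_1, …, x_{n+1}}`. -/
theorem biorthogonal_extend_one
    {𝕜 X : Type*} [RCLike 𝕜] [NormedAddCommGroup X] [NormedSpace 𝕜 X] [CompleteSpace X]
    (hX : ¬FiniteDimensional 𝕜 X) (u : X) (n : ℕ)
    (x : Fin n → X) (f : Fin n → X →L[𝕜] 𝕜)
    (hbi : ∀ i j, f i (x j) = if i = j then 1 else 0) :
    ∃ (xn : X) (fn : X →L[𝕜] 𝕜),
      ‖xn‖ = 1 ∧
      (∀ i, f i xn = 0) ∧ (∀ i, fn (x i) = 0) ∧ fn xn = 1 ∧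
      u ∈ Submodule.span 𝕜 (Set.range x ∪ {xn}) := by
  classical
  set S : Submodule 𝕜 X := Submodule.span 𝕜 (Set.range x) with hSdef
  have hSfd : FiniteDimensional 𝕜 S :=
    FiniteDimensional.span_of_finite 𝕜 (Set.finite_range x)
  -- any element of S killed by all f i is zero
  have hker : ∀ y ∈ S, (∀ i, f i y = 0) → y = 0 := by
    intro y hy hfy
    obtain ⟨c, hc⟩ := (Submodule.mem_span_range_iff_exists_fun 𝕜).1 hy
    have hcz : ∀ j, c j = 0 := by
      intro j
      have := hfy j
      rw [← hc] at this
      simpa [hbi] using this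
    simp [← hc, hcz]
  -- compute f applied to "projections"
  have hproj : ∀ (w : X) (i : Fin n), f i (w - ∑ j, f j w • x j) = 0 := by
    intro w i
    simp [hbi]
  -- produce y ≠ 0 with f i y = 0 and u - ∑ f i u • x i ∈ span (range x ∪ {y-direction})
  have key : ∀ (y : X), y ≠ 0 → (∀ i, f i y = 0) →
      ∃ fn : X →L[𝕜] 𝕜, (∀ i, fn (x i) = 0) ∧ fn ((‖y‖ : 𝕜)⁻¹ • y) = 1 := by
    intro y hy hfy
    have hxnS : y ∉ S := fun h => hy (hker y h hfy)
    haveI : IsClosed (S : Set X) := S.closed_of_finiteDimensional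
    set mkL : X →L[𝕜] X ⧸ S :=
      { toLinearMap := S.mkQ, cont := continuous_quot_mk } with hmkL
    have hy0 : mkL y ≠ 0 := by
      change S.mkQ y ≠ 0
      simpa [hmkL, Submodule.Quotient.mk_eq_zero] using hxnS
    obtain ⟨g, hg⟩ := SeparatingDual.exists_eq_one (R := 𝕜) hy0
    have hnorm : (‖y‖ : 𝕜) ≠ 0 := by
      simp [norm_eq_zero, hy]
    refine ⟨(‖y‖ : 𝕜) • (g.comp mkL), ?_, ?_⟩
    · intro i
      have hxiS : x i ∈ S := Submodule.subset_span ⟨i, rfl⟩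
      simp only [ContinuousLinearMap.smul_apply, ContinuousLinearMap.comp_apply]
      have : mkL (x i) = 0 := by
        change S.mkQ (x i) = 0
        simpa [hmkL, Submodule.Quotient.mk_eq_zero] using hxiS
      simp [this]
    · simp only [ContinuousLinearMap.smul_apply, ContinuousLinearMap.comp_apply, map_smul,
        smul_eq_mul, hg]
      field_simp
  set v : X := u - ∑ j, f j u • x j with hv
  by_cases hvz : v = 0
  · -- u ∈ span (range x); pick any unit vector outside
    have hSne : S ≠ ⊤ := by
      intro h
      exact hX ((Submodule.topEquiv.symm.trans (LinearEquiv.ofEq _ _ h.symm)).symm.finiteDimensional)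
    obtain ⟨w, hw⟩ : ∃ w : X, w ∉ S := by
      by_contra h
      push_neg at h
      exact hSne (Submodule.eq_top_iff'.2 h)
    set y : X := w - ∑ j, f j w • x j with hy
    have hynz : y ≠ 0 := by
      intro h
      apply hw
      have : w = ∑ j, f j w • x j := by rwa [hy, sub_eq_zero] at h
      rw [this]
      exact Submodule.sum_mem _ fun j _ => Submodule.smul_mem _ _ (Submodule.subset_span ⟨j, rfl⟩)
    have hfy : ∀ i, f i y = 0 := fun i => hproj w i
    obtain ⟨fn, hfn1, hfn2⟩ := key y hynz hfy
    refine ⟨(‖y‖ : 𝕜)⁻¹ • y, fn, norm_smul_inv_norm hynz, ?_, hfn1, hfn2, ?_⟩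
    · intro i
      simp [map_smul, hfy]
    · have hu : u = ∑ j, f j u • x j := by rwa [hv, sub_eq_zero] at hvz
      rw [hu]
      exact Submodule.sum_mem _ fun j _ => Submodule.smul_mem _ _
        (Submodule.subset_span (Or.inl ⟨j, rfl⟩))
  · have hfv : ∀ i, f i v = 0 := fun i => hproj u i
    obtain ⟨fn, hfn1, hfn2⟩ := key v hvz hfv
    refine ⟨(‖v‖ : 𝕜)⁻¹ • v, fn, norm_smul_inv_norm hvz, ?_, hfn1, hfn2, ?_⟩
    · intro i
      simp [map_smul, hfv]
    · have hu : u = ∑ j, f j u • x j + v := by rw [hv]; abel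
      rw [hu]
      refine Submodule.add_mem _ ?_ ?_
      · exact Submodule.sum_mem _ fun j _ => Submodule.smul_mem _ _
          (Submodule.subset_span (Or.inl ⟨j, rfl⟩))
      · have hmem : (‖v‖ : 𝕜)⁻¹ • v ∈ Submodule.span 𝕜 (Set.range x ∪ {(‖v‖ : 𝕜)⁻¹ • v}) :=
          Submodule.subset_span (Or.inr rfl)
        have hnorm : (‖v‖ : 𝕜) ≠ 0 := by simp [norm_eq_zero, hvz]
        have := Submodule.smul_mem _ (‖v‖ : 𝕜) hmem
        rwa [smul_smul, mul_inv_cancel₀ hnorm, one_smul] at this
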